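/- Algebraic periods of a diagonal self-map of a wedge sum of tori built from maps with characteristic polynomial t^n − c: let n be an odd prime, s ≥ 1 an integer, and for each j ∈ {1,…,s} let A_j be an n×n integer matrix whose characteristic polynomial is t^n − c_j, where c_j > 2 is an integer. Define, for m ≥ 1, L(f^m) := ∑_{j=1}^s det(I_n − A_j^m) − (s − 1) and ℓ(f^m) := ∑_{r∣m} μ(m/r)·L(f^r), where μ is the Möbius function. Then ℓ(f^m) ≠ 0 for every m ≥ 1, i.e. the set of algebraic periods APer_L(f) := {m ≥ 1 : ℓ(f^m) ≠ 0} equals the set of all positive integers. -/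

import Mathlib

open Polynomial Matrix Finset

private lemma eval_charpoly_aux {R : Type*} [CommRing R] {N : Type*} [DecidableEq N] [Fintype N]
    (M : Matrix N N R) (r : R) :
    M.charpoly.eval r = (r • (1 : Matrix N N R) - M).det := by
  rw [Matrix.charpoly, ← Polynomial.coe_evalRingHom, RingHom.map_det]
  congr 1
  ext i j
  by_cases h : i = j <;>
    simp [h, Matrix.charmatrix_apply_eq, Matrix.charmatrix_apply_ne, Matrix.sub_apply,
      Matrix.smul_apply, Matrix.one_apply]

private lemma det_aeval_prod {R : Type*} [CommRing R] {N : Type*} [DecidableEq N] [Fintype N]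
    (B : Matrix N N R) {ι : Type*} (s : Finset ι) (f : ι → R[X]) :
    (Polynomial.aeval B (∏ i ∈ s, f i)).det = ∏ i ∈ s, (Polynomial.aeval B (f i)).det := by
  classical
  induction s using Finset.induction with
  | empty => simp
  | insert _ _ h ih => rw [Finset.prod_insert h, _root_.map_mul, Matrix.det_mul, ih, Finset.prod_insert h]

private lemma det_one_sub_pow {n : ℕ} (hn : n.Prime) (hodd : Odd n) (c : ℤ)
    (A : Matrix (Fin n) (Fin n) ℤ) (hA : A.charpoly = X ^ n - C c)
    {m : ℕ} (hm : 1 ≤ m) :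
    (1 - A ^ m).det = if n ∣ m then -((c ^ (m / n) - 1) ^ n) else -(c ^ m - 1) := by
  by_cases hdvd : n ∣ m
  · -- Cayley–Hamilton: A ^ n = c • 1
    rw [if_pos hdvd]
    have hCH := Matrix.aeval_self_charpoly A
    rw [hA, map_sub, aeval_X_pow, aeval_C, sub_eq_zero] at hCH
    have hAn : A ^ n = c • (1 : Matrix (Fin n) (Fin n) ℤ) := by
      rw [hCH, Algebra.algebraMap_eq_smul_one]
    obtain ⟨k, hk⟩ := hdvd
    have hmk : m / n = k := by rw [hk, Nat.mul_div_cancel_left _ hn.pos]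
    have hApow : A ^ m = (c ^ k) • (1 : Matrix (Fin n) (Fin n) ℤ) := by
      rw [hk, pow_mul, hAn, _root_.smul_pow, one_pow]
    have h1 : (1 : Matrix (Fin n) (Fin n) ℤ) - (c ^ k) • 1 = (1 - c ^ k) • 1 := by
      rw [sub_smul, one_smul]
    rw [hApow, h1, Matrix.det_smul, Matrix.det_one, Fintype.card_fin, mul_one, hmk,
      ← neg_sub (c ^ k) 1, hodd.neg_pow]
  · rw [if_neg hdvd]
    have hn1 : 1 < n := hn.one_lt
    rcases eq_or_lt_of_le hm with h1 | h1
    · -- m = 1 : direct computation over ℤ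
      have : (1 : Matrix (Fin n) (Fin n) ℤ) - A ^ m = (1 : ℤ) • 1 - A := by
        rw [← h1, pow_one, one_smul]
      rw [this, ← eval_charpoly_aux, hA]
      simp [← h1]
    · -- 1 < m : work over ℂ
      have hm0 : (m : ℕ) ≠ 0 := by omega
      have hmpos : 0 < m := by omega
      have hm0 : (m : ℕ) ≠ 0 := by omega
      let f : ℤ →+* ℂ := Int.castRingHom ℂ
      set B : Matrix (Fin n) (Fin n) ℂ := f.mapMatrix A with hBdef
      have hB : B.charpoly = X ^ n - C (c : ℂ) := by
        rw [hBdef, RingHom.mapMatrix_apply, Matrix.charpoly_map, hA]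
        simp [Polynomial.map_sub, Polynomial.map_pow]
      have hcast : ((1 - A ^ m).det : ℂ) = (1 - B ^ m).det := by
        have hmap : (1 : Matrix (Fin n) (Fin n) ℂ) - B ^ m = f.mapMatrix (1 - A ^ m) := by
          rw [hBdef, map_sub, _root_.map_one, map_pow]
        rw [hmap, ← RingHom.map_det]
        rfl
      have hprim := Complex.isPrimitiveRoot_exp m hm0
      have hfact : (X : ℂ[X]) ^ m - 1 = ∏ ζ ∈ nthRootsFinset m (1 : ℂ), (X - C ζ) :=
        X_pow_sub_one_eq_prod hmpos hprim
      have hfac : ∀ ζ : ℂ, ζ ∈ nthRootsFinset m (1 : ℂ) →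
          (Polynomial.aeval B (X - C ζ)).det = -(ζ ^ n - (c : ℂ)) := by
        intro ζ _
        have h1 : Polynomial.aeval B (X - C ζ) = -(ζ • 1 - B) := by
          rw [map_sub, aeval_X, aeval_C, Algebra.algebraMap_eq_smul_one, neg_sub]
        rw [h1, Matrix.det_neg, ← eval_charpoly_aux, hB, Fintype.card_fin, hodd.neg_one_pow]
        simp
      have hdet1 : ((B ^ m - 1).det : ℂ) =
          ∏ ζ ∈ nthRootsFinset m (1 : ℂ), -(ζ ^ n - (c : ℂ)) := by
        have : B ^ m - 1 = Polynomial.aeval B ((X : ℂ[X]) ^ m - 1) := by simp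
        rw [this, hfact, det_aeval_prod, Finset.prod_congr rfl hfac]
      have hcard : (nthRootsFinset m (1 : ℂ)).card = m := hprim.card_nthRootsFinset
      -- the n-th power map is a bijection on m-th roots of unity
      have hcop : Nat.Coprime n m := (Nat.Prime.coprime_iff_not_dvd hn).mpr hdvd
      obtain ⟨b, -, hb⟩ := Nat.exists_mul_mod_eq_one_of_coprime hcop h1
      have hbij : ∏ ζ ∈ nthRootsFinset m (1 : ℂ), ((ζ : ℂ) ^ n - (c : ℂ)) =
          ∏ ζ ∈ nthRootsFinset m (1 : ℂ), (ζ - (c : ℂ)) := by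
        refine Finset.prod_nbij' (fun ζ => ζ ^ n) (fun ζ => ζ ^ b) ?_ ?_ ?_ ?_ ?_
        · intro ζ hζ
          rw [mem_nthRootsFinset hmpos] at hζ ⊢
          rw [← pow_mul, mul_comm, pow_mul, hζ, one_pow]
        · intro ζ hζ
          rw [mem_nthRootsFinset hmpos] at hζ ⊢
          rw [← pow_mul, mul_comm, pow_mul, hζ, one_pow]
        · intro ζ hζ
          rw [mem_nthRootsFinset hmpos] at hζ
          show (ζ ^ n) ^ b = ζ
          rw [← pow_mul, pow_eq_pow_mod (n * b) hζ, hb, pow_one]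
        · intro ζ hζ
          rw [mem_nthRootsFinset hmpos] at hζ
          show (ζ ^ b) ^ n = ζ
          rw [← pow_mul, pow_eq_pow_mod (b * n) hζ, mul_comm b n, hb, pow_one]
        · intro ζ hζ
          rfl
      have hneg : ∀ (g : ℂ → ℂ), ∏ ζ ∈ nthRootsFinset m (1 : ℂ), -(g ζ) =
          (-1) ^ m * ∏ ζ ∈ nthRootsFinset m (1 : ℂ), g ζ := by
        intro g
        calc ∏ ζ ∈ nthRootsFinset m (1 : ℂ), -(g ζ)
            = ∏ ζ ∈ nthRootsFinset m (1 : ℂ), ((-1) * g ζ) :=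
              Finset.prod_congr rfl fun _ _ => (neg_one_mul _).symm
          _ = (∏ _ζ ∈ nthRootsFinset m (1 : ℂ), (-1 : ℂ)) * ∏ ζ ∈ nthRootsFinset m (1 : ℂ), g ζ :=
              Finset.prod_mul_distrib
          _ = (-1) ^ m * ∏ ζ ∈ nthRootsFinset m (1 : ℂ), g ζ := by
              rw [Finset.prod_const, hcard]
      have heval : ∏ ζ ∈ nthRootsFinset m (1 : ℂ), ((c : ℂ) - ζ) = (c : ℂ) ^ m - 1 := by
        have := congrArg (Polynomial.eval (c : ℂ)) hfact
        simpa [Polynomial.eval_prod] using this.symm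
      have hflip : ∏ ζ ∈ nthRootsFinset m (1 : ℂ), ((ζ : ℂ) - (c : ℂ)) =
          (-1) ^ m * ((c : ℂ) ^ m - 1) := by
        rw [← heval, ← hneg fun ζ => (c : ℂ) - ζ]
        simp
      have hdet2 : ((1 - A ^ m).det : ℂ) = -((c : ℂ) ^ m - 1) := by
        have h2 : (1 : Matrix (Fin n) (Fin n) ℂ) - B ^ m = -(B ^ m - 1) := (neg_sub _ _).symm
        rw [hcast, h2, Matrix.det_neg, Fintype.card_fin, hodd.neg_one_pow, hdet1,
          hneg fun ζ => ζ ^ n - (c : ℂ), hbij, hflip]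
        have hmm : ((-1 : ℂ)) ^ m * (-1) ^ m = 1 := by rw [← mul_pow]; norm_num
        linear_combination (-((c : ℂ) ^ m - 1)) * hmm
      have : ((1 - A ^ m).det : ℂ) = ((-(c ^ m - 1) : ℤ) : ℂ) := by
        rw [hdet2]; push_cast; ring
      exact_mod_cast this

private lemma sub_one_pow_le {x : ℤ} (hx : 1 ≤ x) {k : ℕ} (hk : 1 ≤ k) :
    (x - 1) ^ k ≤ x ^ k - 1 := by
  obtain ⟨j, rfl⟩ : ∃ j, k = j + 1 := ⟨k - 1, by omega⟩
  have h1 : (x - 1) ^ j ≤ x ^ j := pow_le_pow_left₀ (by omega) (by omega) j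
  have h2 : (1 : ℤ) ≤ x ^ j := one_le_pow₀ hx
  calc (x - 1) ^ (j + 1) = (x - 1) ^ j * (x - 1) := pow_succ _ _
    _ ≤ x ^ j * (x - 1) := by nlinarith
    _ = x ^ (j + 1) - x ^ j := by ring
    _ ≤ x ^ (j + 1) - 1 := by linarith

private lemma moebius_ge_neg_one (x : ℕ) : -1 ≤ (ArithmeticFunction.moebius x : ℤ) := by
  by_cases hsf : Squarefree x
  · rw [ArithmeticFunction.moebius_apply_of_squarefree hsf]
    rcases Nat.even_or_odd (ArithmeticFunction.cardFactors x) with he | ho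
    · rw [he.neg_one_pow]; omega
    · rw [ho.neg_one_pow]
  · rw [ArithmeticFunction.moebius_eq_zero_of_not_squarefree hsf]; omega

private lemma dold_pos_abstract {c : ℤ} (hc : 3 ≤ c) (E : ℕ → ℤ)
    (hEpos : ∀ r, 1 ≤ r → 1 ≤ E r)
    (hEle : ∀ r, 1 ≤ r → E r ≤ c ^ r - 1)
    (hElb : ∀ M, 2 ≤ M → c ^ (M / 2 + 1) < 2 * E M)
    {m : ℕ} (hm : 1 ≤ m) :
    0 < ∑ r ∈ m.divisors, (ArithmeticFunction.moebius (m / r) : ℤ) * E r := by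
  rcases eq_or_lt_of_le hm with h1 | h2
  · rw [← h1]
    simp only [Nat.divisors_one, Finset.sum_singleton, Nat.div_self Nat.one_pos,
      ArithmeticFunction.moebius_apply_one, one_mul]
    have := hEpos 1 le_rfl
    omega
  -- m ≥ 2
  have hm0 : m ≠ 0 := by omega
  rw [← Nat.cons_self_properDivisors hm0, Finset.sum_cons, Nat.div_self (by omega),
    ArithmeticFunction.moebius_apply_one, one_mul]
  have hkey : -∑ r ∈ m.properDivisors, E r ≤
      ∑ r ∈ m.properDivisors, (ArithmeticFunction.moebius (m / r) : ℤ) * E r := by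
    rw [← Finset.sum_neg_distrib]
    refine Finset.sum_le_sum fun r hr => ?_
    have h0 : (0:ℤ) ≤ E r := le_trans zero_le_one (hEpos r (Nat.pos_of_mem_properDivisors hr))
    have := mul_le_mul_of_nonneg_right (moebius_ge_neg_one (m / r)) h0
    rwa [neg_one_mul] at this
  have hsub : m.properDivisors ⊆ Finset.Icc 1 (m / 2) := by
    intro r hr
    obtain ⟨hdvd, hlt⟩ := Nat.mem_properDivisors.mp hr
    obtain ⟨t, ht⟩ := hdvd
    have hr1 : 1 ≤ r := by
      rcases Nat.eq_zero_or_pos r with h | h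
      · subst h; simp at ht; omega
      · exact h
    have ht2 : 2 ≤ t := by
      by_contra h
      interval_cases t <;> omega
    have : 2 * r ≤ m := by nlinarith
    rw [Finset.mem_Icc]
    omega
  have hproper : ∑ r ∈ m.properDivisors, E r ≤ ∑ r ∈ Finset.Icc 1 (m / 2), c ^ r := by
    calc ∑ r ∈ m.properDivisors, E r
        ≤ ∑ r ∈ m.properDivisors, c ^ r := by
          refine Finset.sum_le_sum fun r hr => ?_
          have h1 := hEle r (Nat.pos_of_mem_properDivisors hr)
          linarith
      _ ≤ ∑ r ∈ Finset.Icc 1 (m / 2), c ^ r :=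
          Finset.sum_le_sum_of_subset_of_nonneg hsub fun i _ _ => pow_nonneg (by omega) i
  have hgeom : ∀ t : ℕ, 2 * ∑ r ∈ Finset.Icc 1 t, c ^ r ≤ c ^ (t + 1) := by
    intro t
    induction t with
    | zero =>
      rw [show Finset.Icc 1 0 = ∅ from Finset.Icc_eq_empty (by omega)]
      simp
      omega
    | succ t ih =>
      rw [Finset.sum_Icc_succ_top (by omega)]
      have hp : (0:ℤ) ≤ c ^ (t + 1) := pow_nonneg (by omega) _
      have hstep : c ^ (t + 2) = c * c ^ (t + 1) := by ring
      nlinarith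
  have hlb := hElb m h2
  have hics := hgeom (m / 2)
  linarith

private lemma dold_pos {n : ℕ} (hn : n.Prime) (hodd : Odd n) {c : ℤ} (hc : 3 ≤ c)
    {m : ℕ} (hm : 1 ≤ m) :
    0 < ∑ r ∈ m.divisors, (ArithmeticFunction.moebius (m / r) : ℤ) *
        (if n ∣ r then (c ^ (r / n) - 1) ^ n else c ^ r - 1) := by
  have hn3 : 3 ≤ n := by
    have h2 := hn.two_le
    rcases hodd with ⟨t, ht⟩
    omega
  have hc1 : (1:ℤ) ≤ c := by omega
  refine dold_pos_abstract hc _ ?_ ?_ ?_ hm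
  · -- positivity
    intro r hr
    by_cases hd : n ∣ r
    · rw [if_pos hd]
      have hq : 1 ≤ r / n := (Nat.one_le_div_iff (by omega)).mpr (Nat.le_of_dvd (by omega) hd)
      have h3 : (3:ℤ) ≤ c ^ (r / n) := le_trans hc (le_self_pow₀ hc1 (by omega))
      exact one_le_pow₀ (by omega)
    · rw [if_neg hd]
      have h3 : (3:ℤ) ≤ c ^ r := le_trans hc (le_self_pow₀ hc1 (by omega))
      omega
  · -- upper bound
    intro r hr
    by_cases hd : n ∣ r
    · rw [if_pos hd]
      have hq : 1 ≤ r / n := (Nat.one_le_div_iff (by omega)).mpr (Nat.le_of_dvd (by omega) hd)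
      have hx : (1:ℤ) ≤ c ^ (r / n) := one_le_pow₀ hc1
      calc (c ^ (r / n) - 1) ^ n ≤ (c ^ (r / n)) ^ n - 1 := sub_one_pow_le hx (by omega)
        _ = c ^ r - 1 := by rw [← pow_mul, Nat.div_mul_cancel hd]
    · rw [if_neg hd]
  · -- the key lower bound
    intro M hM
    by_cases hd : n ∣ M
    · rw [if_pos hd]
      set k := M / n with hk
      have hk1 : 1 ≤ k := (Nat.one_le_div_iff (by omega)).mpr (Nat.le_of_dvd (by omega) hd)
      have hMk : M = n * k := (Nat.mul_div_cancel' hd).symm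
      have hck : (3:ℤ) ≤ c ^ k := le_trans hc (le_self_pow₀ hc1 (by omega))
      set X := c ^ k - 1 with hX
      have hX2 : (2:ℤ) ≤ X := by omega
      have hsq1 : c ^ (2 * k) ≤ 3 * X ^ 2 := by
        have h1 : c ^ (2 * k) = (c ^ k) ^ 2 := by rw [mul_comm, pow_mul]
        nlinarith
      have hsq2 : c ^ (2 * M) ≤ 3 ^ n * (X ^ 2) ^ n := by
        have hexp : 2 * k * n = 2 * M := by
          rw [hMk]; ring
        calc c ^ (2 * M) = (c ^ (2 * k)) ^ n := by rw [← pow_mul, hexp]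
          _ ≤ (3 * X ^ 2) ^ n := pow_le_pow_left₀ (pow_nonneg (by omega) _) hsq1 n
          _ = 3 ^ n * (X ^ 2) ^ n := mul_pow _ _ _
      have hexp2 : (n - 1) + 2 * (M / 2 + 1) ≤ 2 * M := by
        rcases Nat.even_or_odd M with hev | hod
        · have hk2 : 2 ≤ k := by
            by_contra h
            have hkk : k = 1 := by omega
            rw [hkk, mul_one] at hMk
            rcases hodd with ⟨t, ht⟩
            rcases hev with ⟨u, hu⟩
            omega
          have hM2n : n * 2 ≤ M := by
            rw [hMk]
            exact Nat.mul_le_mul_left n hk2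
          rcases hev with ⟨u, hu⟩
          omega
        · have hnM : n ≤ M := Nat.le_of_dvd (by omega) hd
          rcases hod with ⟨t, ht⟩
          omega
      have h3 : 3 ^ n * c ^ (2 * (M / 2 + 1)) ≤ 3 * c ^ (2 * M) := by
        have h31 : (3:ℤ) ^ n = 3 * 3 ^ (n - 1) := by
          rw [← pow_succ']
          congr 1
          omega
        have h32 : (3:ℤ) ^ (n - 1) ≤ c ^ (n - 1) := pow_le_pow_left₀ (by omega) (by omega) _
        have h34 : c ^ ((n - 1) + 2 * (M / 2 + 1)) ≤ c ^ (2 * M) := pow_le_pow_right₀ hc1 hexp2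
        have hcp : (0:ℤ) ≤ c ^ (2 * (M / 2 + 1)) := pow_nonneg (by omega) _
        calc 3 ^ n * c ^ (2 * (M / 2 + 1)) = 3 * (3 ^ (n-1) * c ^ (2 * (M / 2 + 1))) := by
              rw [h31]; ring
          _ ≤ 3 * (c ^ (n-1) * c ^ (2 * (M / 2 + 1))) := by
              have := mul_le_mul_of_nonneg_right h32 hcp
              linarith
          _ = 3 * c ^ ((n - 1) + 2 * (M / 2 + 1)) := by rw [← pow_add]
          _ ≤ 3 * c ^ (2 * M) := by linarith
      have h4 : c ^ (2 * (M / 2 + 1)) ≤ 3 * (X ^ 2) ^ n := by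
        have h42 : (0:ℤ) < 3 ^ n := by positivity
        have h41 : 3 ^ n * c ^ (2 * (M / 2 + 1)) ≤ 3 ^ n * (3 * (X ^ 2) ^ n) := by
          calc 3 ^ n * c ^ (2 * (M / 2 + 1)) ≤ 3 * c ^ (2 * M) := h3
            _ ≤ 3 * (3 ^ n * (X ^ 2) ^ n) := by linarith
            _ = 3 ^ n * (3 * (X ^ 2) ^ n) := by ring
        exact le_of_mul_le_mul_left h41 h42
      have hXn : (0:ℤ) < X ^ n := pow_pos (by omega) _
      have h5 : (c ^ (M / 2 + 1)) ^ 2 < (2 * X ^ n) ^ 2 := by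
        have he : (c ^ (M / 2 + 1)) ^ 2 = c ^ (2 * (M / 2 + 1)) := by
          rw [← pow_mul, mul_comm]
        have hXX : ((X ^ 2) ^ n) = (X ^ n) ^ 2 := by
          rw [← pow_mul, mul_comm, pow_mul]
        calc (c ^ (M / 2 + 1)) ^ 2 = c ^ (2 * (M / 2 + 1)) := he
          _ ≤ 3 * (X ^ 2) ^ n := h4
          _ < 4 * (X ^ 2) ^ n := by
              have : (0:ℤ) < (X ^ 2) ^ n := by positivity
              linarith
          _ = (2 * X ^ n) ^ 2 := by rw [hXX]; ring
      by_contra hcon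
      push_neg at hcon
      have hsq : (2 * X ^ n) ^ 2 ≤ (c ^ (M / 2 + 1)) ^ 2 :=
        pow_le_pow_left₀ (by linarith) hcon 2
      linarith
    · rw [if_neg hd]
      have h1 : M / 2 + 1 ≤ M := by omega
      have h2 : c ^ (M / 2 + 1) ≤ c ^ M := pow_le_pow_right₀ hc1 h1
      have h3 : (3:ℤ) ≤ c ^ M := le_trans hc (le_self_pow₀ hc1 (by omega))
      linarith

private lemma moebius_div_sum (m : ℕ) :
    ∑ r ∈ m.divisors, (ArithmeticFunction.moebius (m / r) : ℤ) =
      if m = 1 then 1 else 0 := by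
  calc ∑ r ∈ m.divisors, (ArithmeticFunction.moebius (m / r) : ℤ)
      = ∑ r ∈ m.divisors, (ArithmeticFunction.moebius r : ℤ) := Nat.sum_div_divisors m _
    _ = (ArithmeticFunction.moebius * ↑ArithmeticFunction.zeta) m :=
        (ArithmeticFunction.coe_mul_zeta_apply).symm
    _ = (1 : ArithmeticFunction ℤ) m := by rw [ArithmeticFunction.moebius_mul_coe_zeta]
    _ = if m = 1 then 1 else 0 := ArithmeticFunction.one_apply

/-- **Algebraic periods of a diagonal self-map of a wedge sum of tori built from maps with
characteristic polynomial `t^n − c`.**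
Let `n` be an odd prime and, for each `j ∈ {1,…,s}`, let `A j` be an integer `n×n` matrix
with characteristic polynomial `t^n − c_j`, where `c_j > 2` (`A j` is the matrix induced on
`H₁(T^n; ℤ)` by the coordinate map `g_{c_j} : T^n → T^n` of the diagonal self-map
`f = g_{c₁} ∨ ⋯ ∨ g_{c_s}` of the wedge sum of `s` copies of `T^n`).  With Lefschetz numbers
`L(f^m) = ∑_{j=1}^s det(I_n − A_j^m) − (s − 1)` and Dold coefficients
`ℓ(f^m) = ∑_{r∣m} μ(m/r)·L(f^r)` (`μ` the Möbius function), one has `ℓ(f^m) ≠ 0` for every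
`m ≥ 1`, i.e. `APer_L(f) = {m : m ≥ 1}`, the set of all positive integers. -/
theorem stmt16 (n s : ℕ) (hn : n.Prime) (hodd : Odd n) (hs : 1 ≤ s)
    (c : Fin s → ℤ) (hc : ∀ j, 2 < c j)
    (A : Fin s → Matrix (Fin n) (Fin n) ℤ)
    (hA : ∀ j, (A j).charpoly = Polynomial.X ^ n - Polynomial.C (c j))
    (L : ℕ → ℤ)
    (hL : ∀ m, L m = (∑ j : Fin s, (1 - (A j) ^ m).det) - ((s : ℤ) - 1))
    (ℓ : ℕ → ℤ)
    (hℓ : ∀ m, ℓ m = ∑ r ∈ m.divisors, (ArithmeticFunction.moebius (m / r)) * L r) :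
    ∀ m, 1 ≤ m → ℓ m ≠ 0 := by
  intro m hm
  set E : Fin s → ℕ → ℤ :=
    fun j r => if n ∣ r then (c j ^ (r / n) - 1) ^ n else c j ^ r - 1 with hE
  have hLr : ∀ r ∈ m.divisors, L r = -(∑ j, E j r) - ((s : ℤ) - 1) := by
    intro r hr
    have hr1 : 1 ≤ r := Nat.pos_of_mem_divisors hr
    rw [hL r, ← Finset.sum_neg_distrib]
    congr 1
    refine Finset.sum_congr rfl fun j _ => ?_
    rw [det_one_sub_pow hn hodd (c j) (A j) (hA j) hr1, hE]
    by_cases h : n ∣ r <;> simp [h]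
  have hmain : ℓ m = -(∑ j, ∑ r ∈ m.divisors,
        (ArithmeticFunction.moebius (m / r) : ℤ) * E j r) -
      ((s : ℤ) - 1) * (if m = 1 then 1 else 0) := by
    rw [hℓ m]
    calc ∑ r ∈ m.divisors, (ArithmeticFunction.moebius (m / r) : ℤ) * L r
        = ∑ r ∈ m.divisors, (-(∑ j, (ArithmeticFunction.moebius (m / r) : ℤ) * E j r) -
            ((s : ℤ) - 1) * (ArithmeticFunction.moebius (m / r) : ℤ)) := by
          refine Finset.sum_congr rfl fun r hr => ?_
          rw [hLr r hr, mul_sub, mul_neg, Finset.mul_sum]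
          ring
      _ = -(∑ r ∈ m.divisors, ∑ j, (ArithmeticFunction.moebius (m / r) : ℤ) * E j r) -
            ∑ r ∈ m.divisors, ((s : ℤ) - 1) * (ArithmeticFunction.moebius (m / r) : ℤ) := by
          rw [Finset.sum_sub_distrib, Finset.sum_neg_distrib]
      _ = -(∑ j, ∑ r ∈ m.divisors, (ArithmeticFunction.moebius (m / r) : ℤ) * E j r) -
            ((s : ℤ) - 1) * ∑ r ∈ m.divisors, (ArithmeticFunction.moebius (m / r) : ℤ) := by
          rw [Finset.sum_comm, Finset.mul_sum]
      _ = -(∑ j, ∑ r ∈ m.divisors, (ArithmeticFunction.moebius (m / r) : ℤ) * E j r) -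
            ((s : ℤ) - 1) * (if m = 1 then 1 else 0) := by
          rw [moebius_div_sum m]
  have hT : ∀ j : Fin s, 0 < ∑ r ∈ m.divisors,
      (ArithmeticFunction.moebius (m / r) : ℤ) * E j r := by
    intro j
    exact dold_pos hn hodd (by have := hc j; omega) hm
  have hsumT : (s : ℤ) ≤ ∑ j : Fin s, ∑ r ∈ m.divisors,
      (ArithmeticFunction.moebius (m / r) : ℤ) * E j r := by
    calc (s : ℤ) = ∑ _j : Fin s, (1 : ℤ) := by
          rw [Finset.sum_const, Finset.card_univ, Fintype.card_fin]; simp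
      _ ≤ _ := Finset.sum_le_sum fun j _ => hT j
  have hs1 : (1 : ℤ) ≤ (s : ℤ) := by exact_mod_cast hs
  have hite : (0 : ℤ) ≤ ((s : ℤ) - 1) * (if m = 1 then 1 else 0) := by
    split
    · omega
    · omega
  have : ℓ m < 0 := by rw [hmain]; linarith
  exact this.ne
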